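/- arXiv:1101.4922 — 4 statements merged into one kernel-verified Lean document; each statement's English description precedes it below -/
import Mathlib

section
/- For every n×n matrix W over 𝔽₂ with all diagonal entries equal to 1, and every vector c ∈ 𝔽₂ⁿ, there exists x ∈ 𝔽₂ⁿ such that the Hamming weight of W·x + c is at least ⌈n/2⌉. -/
open Finset

lemma two_mul_sum_ind (n : ℕ) (W : Matrix (Fin n) (Fin n) (ZMod 2))
    (hW : ∀ i, W i i = 1) (c : Fin n → ZMod 2) (i : Fin n) :
    2 * ∑ x : Fin n → ZMod 2, (if (W.mulVec x + c) i ≠ 0 then 1 else 0) = 2 ^ n := by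
  have hab : ∀ a b : ZMod 2, a + b + b = a := by decide
  have hinv : Function.Involutive (fun x : Fin n → ZMod 2 => x + Pi.single i 1) :=
    fun x => funext fun j => hab _ _
  set e : (Fin n → ZMod 2) → (Fin n → ZMod 2) := fun x => x + Pi.single i 1 with he'
  have he : ∀ x, e x = x + Pi.single i 1 := fun _ => rfl
  have key : ∀ x : Fin n → ZMod 2,
      ((if (W.mulVec (e x) + c) i ≠ 0 then 1 else 0) : ℕ)
        + (if (W.mulVec x + c) i ≠ 0 then 1 else 0) = 1 := by
    intro x
    have h1 : (W.mulVec (e x) + c) i = (W.mulVec x + c) i + 1 := by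
      rw [he, Matrix.mulVec_add, Matrix.mulVec_single]
      simp only [Pi.add_apply, hW i, mul_one, Pi.smul_apply, Matrix.col_apply, MulOpposite.op_one, one_smul]
      ring
    rw [h1]
    have h2 : ∀ a : ZMod 2, ((if a + 1 ≠ 0 then 1 else 0) : ℕ) + (if a ≠ 0 then 1 else 0) = 1 := by
      decide
    exact h2 _
  have hsum : ∑ x : Fin n → ZMod 2, ((if (W.mulVec (e x) + c) i ≠ 0 then 1 else 0) : ℕ)
      = ∑ x : Fin n → ZMod 2, (if (W.mulVec x + c) i ≠ 0 then 1 else 0) :=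
    Fintype.sum_bijective e hinv.bijective _ _ (fun x => rfl)
  calc 2 * ∑ x : Fin n → ZMod 2, ((if (W.mulVec x + c) i ≠ 0 then 1 else 0) : ℕ)
      = ∑ x : Fin n → ZMod 2, (((if (W.mulVec (e x) + c) i ≠ 0 then 1 else 0) : ℕ)
          + (if (W.mulVec x + c) i ≠ 0 then 1 else 0)) := by
        rw [Finset.sum_add_distrib, hsum]; ring
    _ = ∑ _x : Fin n → ZMod 2, 1 := Finset.sum_congr rfl fun x _ => key x
    _ = 2 ^ n := by simp

/-- There exists `x` with `|W·x + c| ≥ ⌈n/2⌉`. -/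
theorem exists_hammingNorm_ge_half (n : ℕ) (W : Matrix (Fin n) (Fin n) (ZMod 2))
    (hW : ∀ i, W i i = 1) (c : Fin n → ZMod 2) :
    ∃ x : Fin n → ZMod 2, (n + 1) / 2 ≤ hammingNorm (W.mulVec x + c) := by
  have hnorm : ∀ x : Fin n → ZMod 2, hammingNorm (W.mulVec x + c)
      = ∑ i : Fin n, ((if (W.mulVec x + c) i ≠ 0 then 1 else 0) : ℕ) := by
    intro x
    simp [hammingNorm, Finset.card_filter]
  have htot : ∑ x : Fin n → ZMod 2, 2 * hammingNorm (W.mulVec x + c) = n * 2 ^ n := by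
    calc ∑ x : Fin n → ZMod 2, 2 * hammingNorm (W.mulVec x + c)
        = ∑ x : Fin n → ZMod 2, ∑ i : Fin n,
            2 * ((if (W.mulVec x + c) i ≠ 0 then 1 else 0) : ℕ) := by
          refine Finset.sum_congr rfl fun x _ => ?_
          rw [hnorm x, Finset.mul_sum]
      _ = ∑ i : Fin n, 2 * ∑ x : Fin n → ZMod 2,
            ((if (W.mulVec x + c) i ≠ 0 then 1 else 0) : ℕ) := by
          rw [Finset.sum_comm]
          exact Finset.sum_congr rfl fun i _ => (Finset.mul_sum _ _ _).symm
      _ = ∑ _i : Fin n, 2 ^ n := Finset.sum_congr rfl fun i _ => two_mul_sum_ind n W hW c i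
      _ = n * 2 ^ n := by simp [mul_comm]
  have hne : (Finset.univ : Finset (Fin n → ZMod 2)).Nonempty := Finset.univ_nonempty
  have hle : ∑ _x : Fin n → ZMod 2, n ≤ ∑ x : Fin n → ZMod 2, 2 * hammingNorm (W.mulVec x + c) := by
    rw [htot]
    simp [Fintype.card_fun, mul_comm]
  obtain ⟨x, -, hx⟩ := Finset.exists_le_of_sum_le hne hle
  exact ⟨x, by omega⟩
end

section
/- Define ν(n) = min over all W ∈ A(n) and c ∈ 𝔽₂ⁿ of M(W,c), where A(n) is the set of n×n matrices over 𝔽₂ with all diagonal entries 1 and M(W,c) = max over x ∈ 𝔽₂ⁿ of |W·x + c|. Then ν(n) = ⌈n/2⌉ for all n ≥ 1. -/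
open Finset

/-- `M(W, c) := max_x |W·x + c|`. -/
def maxLit {n : ℕ} (W : Matrix (Fin n) (Fin n) (ZMod 2)) (c : Fin n → ZMod 2) : ℕ :=
  Finset.univ.sup fun x : Fin n → ZMod 2 => hammingNorm (W.mulVec x + c)

lemma lower {n : ℕ} (W : Matrix (Fin n) (Fin n) (ZMod 2)) (c : Fin n → ZMod 2)
    (hW : ∀ i, W i i = 1) : (n + 1) / 2 ≤ maxLit W c := by
  set s : ℕ := ∑ x : Fin n → ZMod 2, hammingNorm (W.mulVec x + c) with hs
  have key : 2 * s = n * 2 ^ n := by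
    have : s = ∑ i : Fin n, ∑ x : Fin n → ZMod 2,
        if (W.mulVec x + c) i ≠ 0 then 1 else 0 := by
      rw [hs, Finset.sum_comm]
      refine Finset.sum_congr rfl fun x _ => ?_
      rw [hammingNorm, Finset.card_filter]
    rw [this, Finset.mul_sum]
    have hcard : Fintype.card (Fin n → ZMod 2) = 2 ^ n := by simp
    have : ∀ i : Fin n, 2 * (∑ x : Fin n → ZMod 2,
        if (W.mulVec x + c) i ≠ 0 then 1 else 0) = 2 ^ n := by
      intro i
      have e := Equiv.addRight (Pi.single i 1 : Fin n → ZMod 2)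
      have h1 : (∑ x : Fin n → ZMod 2, if (W.mulVec x + c) i ≠ 0 then 1 else 0)
          = ∑ x : Fin n → ZMod 2, if (W.mulVec (x + Pi.single i 1) + c) i ≠ 0 then 1 else 0 :=
        (Equiv.sum_comp (Equiv.addRight (Pi.single i 1 : Fin n → ZMod 2))
          (fun x => if (W.mulVec x + c) i ≠ 0 then 1 else 0)).symm
      have : 2 * (∑ x : Fin n → ZMod 2, if (W.mulVec x + c) i ≠ 0 then 1 else 0)
          = ∑ x : Fin n → ZMod 2, ((if (W.mulVec x + c) i ≠ 0 then 1 else 0)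
            + (if (W.mulVec (x + Pi.single i 1) + c) i ≠ 0 then 1 else 0)) := by
        rw [Finset.sum_add_distrib, ← h1]; ring
      rw [this]
      have hone : ∀ x : Fin n → ZMod 2, ((if (W.mulVec x + c) i ≠ 0 then 1 else 0)
          + (if (W.mulVec (x + Pi.single i 1) + c) i ≠ 0 then 1 else 0)) = 1 := by
        intro x
        have hv : (W.mulVec (x + Pi.single i 1) + c) i = (W.mulVec x + c) i + 1 := by
          rw [Matrix.mulVec_add]
          have : W.mulVec (Pi.single i 1) i = 1 := by
            rw [Matrix.mulVec_single]; simpa using hW i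
          simp only [Pi.add_apply, this]; ring
        rw [hv]
        exact (by decide : ∀ a : ZMod 2,
          (if a ≠ 0 then 1 else 0) + (if a + 1 ≠ 0 then 1 else 0) = 1) _
      rw [Finset.sum_congr rfl fun x _ => hone x]
      simp [hcard]
    rw [Finset.sum_congr rfl fun i _ => this i]
    simp [mul_comm]
  have hle : s ≤ 2 ^ n * maxLit W c := by
    calc s ≤ (Finset.univ : Finset (Fin n → ZMod 2)).card • maxLit W c := by
            rw [hs]
            apply Finset.sum_le_card_nsmul
            intro x _
            exact Finset.le_sup (f := fun x : Fin n → ZMod 2 =>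
              hammingNorm (W.mulVec x + c)) (Finset.mem_univ x)
      _ = 2 ^ n * maxLit W c := by simp [smul_eq_mul]
  have h2 : n * 2 ^ n ≤ 2 * maxLit W c * 2 ^ n := by
    calc n * 2 ^ n = 2 * s := key.symm
      _ ≤ 2 * (2 ^ n * maxLit W c) := by omega
      _ = 2 * maxLit W c * 2 ^ n := by ring
  have := Nat.le_of_mul_le_mul_right h2 (pow_pos (by norm_num) n)
  omega

lemma zmod2_eq_one : ∀ {a : ZMod 2}, a ≠ 0 → a = 1 := by decide

lemma card_odd (n : ℕ) : ((Finset.range n).filter fun i => i % 2 = 1).card = n / 2 := by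
  induction n with
  | zero => simp
  | succ m ih =>
    rw [Finset.range_add_one, Finset.filter_insert]
    by_cases h : m % 2 = 1
    · rw [if_pos h, Finset.card_insert_of_notMem (by simp)]; omega
    · rw [if_neg h]; omega

lemma count_main (n : ℕ) (hn : 1 ≤ n) :
    ((Finset.range n).filter fun i => i % 2 = 1 ∨ i = n - 1).card = (n + 1) / 2 := by
  by_cases hpar : (n - 1) % 2 = 1
  · have he : ((Finset.range n).filter fun i => i % 2 = 1 ∨ i = n - 1)
        = (Finset.range n).filter fun i => i % 2 = 1 := by
      refine Finset.filter_congr fun i hi => ?_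
      simp only [Finset.mem_range] at hi
      omega
    rw [he, card_odd]; omega
  · rw [Finset.filter_or]
    have hB : (Finset.range n).filter (fun i => i = n - 1) = {n - 1} := by
      ext i; simp only [Finset.mem_filter, Finset.mem_range, Finset.mem_singleton]; omega
    rw [hB, Finset.card_union_of_disjoint
      (Finset.disjoint_singleton_right.mpr (by simp [hpar]))]
    rw [card_odd, Finset.card_singleton]; omega

lemma upper {n : ℕ} (hn : 1 ≤ n) :
    maxLit (n := n) (fun i j => if (i : ℕ) / 2 = (j : ℕ) / 2 then 1 else 0)
      (fun i => if (i : ℕ) % 2 = 1 ∨ (i : ℕ) = n - 1 then 1 else 0) = (n + 1) / 2 := by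
  set W : Matrix (Fin n) (Fin n) (ZMod 2) :=
    fun i j => if (i : ℕ) / 2 = (j : ℕ) / 2 then 1 else 0 with hWdef
  set c : Fin n → ZMod 2 :=
    fun i => if (i : ℕ) % 2 = 1 ∨ (i : ℕ) = n - 1 then 1 else 0 with hcdef
  have hub : ∀ x : Fin n → ZMod 2, hammingNorm (W.mulVec x + c) ≤ (n + 1) / 2 := by
    intro x
    rw [hammingNorm]
    have := Finset.card_le_card_of_injOn
      (f := fun i : Fin n => (⟨(i : ℕ) / 2, by omega⟩ : Fin ((n + 1) / 2)))
      (s := Finset.univ.filter fun i => (W.mulVec x + c) i ≠ 0)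
      (t := Finset.univ) (fun a _ => Finset.mem_univ _) ?_
    · simpa using this
    · intro i hi j hj hij
      simp only [Finset.mem_coe, Finset.mem_filter] at hi hj
      simp only [Fin.mk.injEq] at hij
      by_contra hne
      have hvne : (i : ℕ) ≠ (j : ℕ) := fun h => hne (Fin.ext h)
      have hrow : W.mulVec x i = W.mulVec x j := by
        unfold Matrix.mulVec dotProduct
        refine Finset.sum_congr rfl fun k _ => ?_
        simp only [hWdef, hij]
      have hi1 : (W.mulVec x + c) i = 1 := zmod2_eq_one hi.2
      have hj1 : (W.mulVec x + c) j = 1 := zmod2_eq_one hj.2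
      have hsum : c i + c j = 0 := by
        have h0 : (W.mulVec x + c) i + (W.mulVec x + c) j = 0 := by rw [hi1, hj1]; decide
        simp only [Pi.add_apply, hrow] at h0
        have h2 : W.mulVec x j + W.mulVec x j = 0 := CharTwo.add_self_eq_zero _
        linear_combination h0 - h2
      have hcase : ((i : ℕ) % 2 = 0 ∧ (j : ℕ) = (i : ℕ) + 1) ∨
          ((j : ℕ) % 2 = 0 ∧ (i : ℕ) = (j : ℕ) + 1) := by omega
      rcases hcase with ⟨h1, h2⟩ | ⟨h1, h2⟩
      · have hiv : ¬ ((i : ℕ) % 2 = 1 ∨ (i : ℕ) = n - 1) := by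
          have := j.isLt; omega
        have hjv : (j : ℕ) % 2 = 1 ∨ (j : ℕ) = n - 1 := by omega
        rw [hcdef] at hsum
        simp only [hiv, hjv, if_true, if_false, if_pos, if_neg, not_false_iff] at hsum
        simp at hsum
      · have hjv : ¬ ((j : ℕ) % 2 = 1 ∨ (j : ℕ) = n - 1) := by
          have := i.isLt; omega
        have hiv : (i : ℕ) % 2 = 1 ∨ (i : ℕ) = n - 1 := by omega
        rw [hcdef] at hsum
        simp only [hiv, hjv, if_true, if_false, if_pos, if_neg, not_false_iff] at hsum
        simp at hsum
  have hlb : hammingNorm (W.mulVec 0 + c) = (n + 1) / 2 := by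
    have h0 : W.mulVec 0 + c = c := by simp [Matrix.mulVec_zero]
    rw [h0, hammingNorm]
    have hpred : (Finset.univ.filter fun i : Fin n => c i ≠ 0)
        = Finset.univ.filter fun i : Fin n => (i : ℕ) % 2 = 1 ∨ (i : ℕ) = n - 1 := by
      refine Finset.filter_congr fun i _ => ?_
      rw [hcdef]
      by_cases h : (i : ℕ) % 2 = 1 ∨ (i : ℕ) = n - 1 <;> simp [h]
    rw [hpred]
    have hc : (Finset.univ.filter fun i : Fin n => (i : ℕ) % 2 = 1 ∨ (i : ℕ) = n - 1).card
        = ((Finset.range n).filter fun i => i % 2 = 1 ∨ i = n - 1).card := by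
      refine Finset.card_bij (fun i _ => (i : ℕ)) ?_ ?_ ?_
      · intro a ha
        simp only [Finset.mem_filter, Finset.mem_univ, true_and] at ha
        simp only [Finset.mem_filter, Finset.mem_range]
        exact ⟨a.isLt, ha⟩
      · intro a _ b _ h; exact Fin.ext h
      · intro b hb; simp only [Finset.mem_filter, Finset.mem_range] at hb
        exact ⟨⟨b, hb.1⟩, by simp only [Finset.mem_filter, Finset.mem_univ, true_and]; exact hb.2, rfl⟩
    rw [hc, count_main n hn]
  refine le_antisymm (Finset.sup_le fun x _ => hub x) ?_
  rw [← hlb]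
  exact Finset.le_sup (f := fun x : Fin n → ZMod 2 =>
    hammingNorm (W.mulVec x + c)) (Finset.mem_univ 0)

/-- `ν(n) = ⌈n/2⌉`: the minimum of `M(W,c)` over all `W` with unit diagonal
and all initial configurations `c` is `⌈n/2⌉`. -/
theorem nu_eq (n : ℕ) (hn : 1 ≤ n) :
    sInf {k : ℕ | ∃ (W : Matrix (Fin n) (Fin n) (ZMod 2)) (c : Fin n → ZMod 2),
      (∀ i, W i i = 1) ∧ k = maxLit W c} = (n + 1) / 2 := by
  have hmem : (n + 1) / 2 ∈ {k : ℕ | ∃ (W : Matrix (Fin n) (Fin n) (ZMod 2))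
      (c : Fin n → ZMod 2), (∀ i, W i i = 1) ∧ k = maxLit W c} :=
    ⟨fun i j => if (i : ℕ) / 2 = (j : ℕ) / 2 then 1 else 0,
     fun i => if (i : ℕ) % 2 = 1 ∨ (i : ℕ) = n - 1 then 1 else 0,
     fun i => by simp, (upper hn).symm⟩
  refine le_antisymm (Nat.sInf_le hmem) (le_csInf ⟨_, hmem⟩ ?_)
  rintro k ⟨W, c, hW, rfl⟩
  exact lower W c hW
end

section
/- Let n = 2r−1 be odd, let e ∈ 𝔽₂ⁿ have eᵢ = 1 exactly when i is even, and let W = diag(J₂,...,J₂,1) be the block-diagonal matrix with r−1 copies of the 2×2 all-ones matrix J₂ followed by a 1×1 block (1). Then for every x ∈ 𝔽₂ⁿ, |W·x + e| ∈ {r−1, r}, and hence max over x of |W·x + e| = r = ⌈n/2⌉. -/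
private lemma zmod2_val_if : ∀ a : ZMod 2, (if a ≠ 0 then (1 : ℕ) else 0) = a.val := by
  decide

private lemma zmod2_pair : ∀ a : ZMod 2, a.val + (a + 1).val = 1 := by
  decide

private lemma sum_range_two_mul {M : Type*} [AddCommMonoid M] (m : ℕ) (g : ℕ → M) :
    ∑ i ∈ Finset.range (2 * m), g i = ∑ k ∈ Finset.range m, (g (2 * k) + g (2 * k + 1)) := by
  induction m with
  | zero => simp
  | succ m ih =>
      have h2 : 2 * (m + 1) = (2 * m + 1) + 1 := by ring
      rw [h2, Finset.sum_range_succ, Finset.sum_range_succ, Finset.sum_range_succ, ← ih,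
        add_assoc]

/-- For `n = 2r−1` odd, the block-diagonal matrix with `r−1` copies of `J₂`
and a final `1×1` block, with the alternating configuration, always has `r−1` or
`r` bulbs lit, and the maximum is `r = ⌈n/2⌉`. -/
theorem blockJ2_odd (r : ℕ) (hr : 1 ≤ r) (n : ℕ) (hn : n = 2 * r - 1)
    (W : Matrix (Fin n) (Fin n) (ZMod 2))
    (hW : ∀ i j, W i j = if (i : ℕ) / 2 = (j : ℕ) / 2 then 1 else 0)
    (e : Fin n → ZMod 2) (he : ∀ i, e i = if Odd (i : ℕ) then 1 else 0) :
    (∀ x : Fin n → ZMod 2,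
        hammingNorm (W.mulVec x + e) = r - 1 ∨ hammingNorm (W.mulVec x + e) = r) ∧
    (Finset.univ.sup fun x : Fin n → ZMod 2 => hammingNorm (W.mulVec x + e)) = r ∧
    r = (n + 1) / 2 := by
  obtain ⟨m, rfl⟩ : ∃ m, r = m + 1 := ⟨r - 1, by omega⟩
  have hn' : n = 2 * m + 1 := by omega
  have hL : 2 * m < n := by omega
  set L : Fin n := ⟨2 * m, hL⟩ with hLdef
  have key : ∀ x : Fin n → ZMod 2,
      hammingNorm (W.mulVec x + e) = m + (x L).val := by
    intro x
    set y := W.mulVec x + e with hy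
    have hnorm : hammingNorm y = ∑ i : Fin n, (y i).val := by
      rw [hammingNorm, Finset.card_filter]
      exact Finset.sum_congr rfl fun i _ => zmod2_val_if (y i)
    set g : ℕ → ℕ := fun i => if h : i < n then (y ⟨i, h⟩).val else 0 with hg
    have hsum : ∑ i : Fin n, (y i).val = ∑ i ∈ Finset.range n, g i := by
      rw [← Fin.sum_univ_eq_sum_range g n]
      exact Finset.sum_congr rfl fun i _ => by simp [hg, i.isLt]
    have hblock : ∀ k ∈ Finset.range m, g (2 * k) + g (2 * k + 1) = 1 := by
      intro k hk
      rw [Finset.mem_range] at hk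
      have h0 : 2 * k < n := by omega
      have h1 : 2 * k + 1 < n := by omega
      set i0 : Fin n := ⟨2 * k, h0⟩
      set i1 : Fin n := ⟨2 * k + 1, h1⟩
      have hrow : W i1 = W i0 := by
        funext j
        rw [hW, hW]
        have : (2 * k + 1) / 2 = (2 * k) / 2 := by omega
        simp only [i0, i1, this]
      have hWx : W.mulVec x i1 = W.mulVec x i0 := by
        simp only [Matrix.mulVec, hrow]
      have he0 : e i0 = 0 := by
        rw [he, if_neg]
        rw [Nat.odd_iff]
        show ¬ (2 * k) % 2 = 1
        omega
      have he1 : e i1 = 1 := by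
        rw [he, if_pos]
        rw [Nat.odd_iff]
        show (2 * k + 1) % 2 = 1
        omega
      have hy0 : y i0 = W.mulVec x i0 := by
        simp [hy, he0]
      have hy1 : y i1 = y i0 + 1 := by
        simp [hy, he0, he1, hWx]
      have : g (2 * k) = (y i0).val := by simp [hg, h0, i0]
      rw [this]
      have : g (2 * k + 1) = (y i1).val := by simp [hg, h1, i1]
      rw [this, hy1]
      exact zmod2_pair (y i0)
    have hlast : g (2 * m) = (x L).val := by
      have heL : e L = 0 := by
        rw [he, if_neg]
        rw [Nat.odd_iff]
        show ¬ (2 * m) % 2 = 1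
        omega
      have hWxL : W.mulVec x L = x L := by
        simp only [Matrix.mulVec, dotProduct]
        rw [Finset.sum_eq_single L]
        · rw [hW]
          simp
        · intro j _ hj
          rw [hW, if_neg, zero_mul]
          intro hcontra
          apply hj
          have hjv : (j : ℕ) < n := j.isLt
          have : (L : ℕ) / 2 = m := by simp only [hLdef, Fin.val_mk]; omega
          rw [this] at hcontra
          have : (j : ℕ) = 2 * m := by omega
          exact Fin.ext this
        · intro h
          exact absurd (Finset.mem_univ L) h
      have hyL : y L = x L := by simp [hy, heL, hWxL]
      simp [hg, hL, ← hLdef, hyL]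
    rw [hnorm, hsum, hn', Finset.sum_range_succ, sum_range_two_mul,
      Finset.sum_congr rfl hblock, Finset.sum_const, Finset.card_range, hlast]
    simp [Nat.add_comm]
  refine ⟨fun x => ?_, ?_, by omega⟩
  · rw [key x]
    have := ZMod.val_lt (x L)
    omega
  · apply le_antisymm
    · apply Finset.sup_le
      intro x _
      rw [key x]
      have := ZMod.val_lt (x L)
      omega
    · have h1 := Finset.le_sup (f := fun x : Fin n → ZMod 2 => hammingNorm (W.mulVec x + e))
        (Finset.mem_univ fun _ => (1 : ZMod 2))
      refine le_trans ?_ h1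
      simp only [key, ZMod.val_one]
      omega
end

section
/- (Pivoting does not increase M.) Let W be an n×n matrix over 𝔽₂ with all diagonal entries 1, let c ∈ 𝔽₂ⁿ, and fix an index i. Define the pivoted matrix Wⁱ by: the j-th column of Wⁱ equals the i-th column of W whenever W j i = 1 (i.e. j ∈ F(i)), and equals the j-th column of W otherwise. Then max over x ∈ 𝔽₂ⁿ of |Wⁱ·x + c| ≤ max over x ∈ 𝔽₂ⁿ of |W·x + c|. -/
/-- Pivoting about a vertex does not increase `M(W,c)`. -/
theorem pivot_le (n : ℕ) (W : Matrix (Fin n) (Fin n) (ZMod 2))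
    (hW : ∀ i, W i i = 1) (c : Fin n → ZMod 2) (i : Fin n) :
    (Finset.univ.sup fun x : Fin n → ZMod 2 =>
        hammingNorm ((Matrix.of fun r j => if W j i = 1 then W r i else W r j :
          Matrix (Fin n) (Fin n) (ZMod 2)).mulVec x + c))
      ≤ Finset.univ.sup fun x : Fin n → ZMod 2 => hammingNorm (W.mulVec x + c) := by
  apply Finset.sup_le
  intro x _
  set S : ZMod 2 := ∑ k ∈ Finset.univ.filter (fun k => W k i = 1), x k with hS
  set y : Fin n → ZMod 2 :=
    fun j => if W j i = 1 then (if j = i then S else 0) else x j with hy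
  have key : (Matrix.of fun r j => if W j i = 1 then W r i else W r j :
      Matrix (Fin n) (Fin n) (ZMod 2)).mulVec x = W.mulVec y := by
    funext r
    simp only [Matrix.mulVec, dotProduct, Matrix.of_apply, hy]
    rw [← Finset.sum_filter_add_sum_filter_not Finset.univ (fun j => W j i = 1),
        ← Finset.sum_filter_add_sum_filter_not Finset.univ (fun j => W j i = 1)
          (fun j => W r j * _)]
    have h1 : ∑ j ∈ Finset.univ.filter (fun j => W j i = 1),
        (if W j i = 1 then W r i else W r j) * x j = W r i * S := by
      rw [hS, Finset.mul_sum]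
      exact Finset.sum_congr rfl fun j hj => by simp [(Finset.mem_filter.mp hj).2]
    have h2 : ∑ j ∈ Finset.univ.filter (fun j => W j i = 1),
        W r j * (if W j i = 1 then (if j = i then S else 0) else x j) = W r i * S := by
      rw [Finset.sum_eq_single i]
      · simp [hW i]
      · intro j hj hne
        simp [(Finset.mem_filter.mp hj).2, hne]
      · intro h
        exact absurd (Finset.mem_filter.mpr ⟨Finset.mem_univ i, hW i⟩) h
    rw [h1, h2]
    congr 1
    refine Finset.sum_congr rfl fun j hj => ?_
    have : ¬ W j i = 1 := (Finset.mem_filter.mp hj).2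
    simp [this]
  rw [key]
  exact Finset.le_sup (f := fun x => hammingNorm (W.mulVec x + c)) (Finset.mem_univ y)
end
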